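/- Let A be a unital C*-algebra. If A has the second type of tracial nuclear dimension at most n (T²dim_nuc(A) ≤ n), then A has the new type of tracial nuclear dimension at most n. -/

import Mathlib

open Filter
open scoped Matrix.Norms.L2Operator

/-- Cuntz subequivalence. -/
def CuntzLE {A : Type*} [CStarAlgebra A] (a b : A) : Prop :=
  ∃ v : ℕ → A, Tendsto (fun n => ‖v n * b * star (v n) - a‖) atTop (nhds 0)

/-- Positivity via the star structure: in a C*-algebra, `x ≥ 0` iff `x = y* y`. -/
def StarPos {R : Type*} [Mul R] [Star R] (x : R) : Prop := ∃ y : R, x = star y * y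

/-- A map between star rings is completely positive if it maps positive matrices (of every
size) to positive matrices. -/
def IsCPMap {R S : Type*} [NonUnitalSemiring R] [StarRing R] [NonUnitalSemiring S]
    [StarRing S] (f : R → S) : Prop :=
  ∀ (k : ℕ) (M : Matrix (Fin k) (Fin k) R), (∃ N : Matrix (Fin k) (Fin k) R, M = star N * N) →
    ∃ N' : Matrix (Fin k) (Fin k) S, M.map f = star N' * N'

/-- The (generic) finite-dimensional C*-algebra `F = F₀ ⊕ ⋯ ⊕ Fₙ`, where each ideal `Fᵢ`
is a direct sum of matrix algebras `M_{d i l}(ℂ)`, `l < m i`. -/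
abbrev FDCStar (n : ℕ) (m : Fin (n + 1) → ℕ) (d : ∀ i, Fin (m i) → ℕ) : Type :=
  ∀ i : Fin (n + 1), ∀ l : Fin (m i), Matrix (Fin (d i l)) (Fin (d i l)) ℂ

/-- Fu's second type of tracial nuclear dimension at most `n` (Definition 2.8). -/
def T2TracialNucDim (A : Type*) [CStarAlgebra A] [PartialOrder A] [StarOrderedRing A]
    (n : ℕ) : Prop :=
  ∀ (F : Finset A), (∀ x ∈ F, 0 ≤ x) → ∀ ε : ℝ, 0 < ε → ∀ a : A, 0 ≤ a → a ≠ 0 →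
    ∃ (m : Fin (n + 1) → ℕ) (d : ∀ i, Fin (m i) → ℕ)
      (ψ : A → FDCStar n m d) (φ : FDCStar n m d → A),
      IsLinearMap ℂ ψ ∧ IsLinearMap ℂ φ ∧ IsCPMap ψ ∧ IsCPMap φ ∧
      (∀ x ∈ F, ∃ x' : A, 0 ≤ x' ∧ CuntzLE x' a ∧ ‖x - x' - φ (ψ x)‖ < ε) ∧
      (∀ x : A, ‖ψ x‖ ≤ ‖x‖) ∧
      (∀ i : Fin (n + 1),
        (∀ y, ‖φ (Pi.single i y)‖ ≤ ‖y‖) ∧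
        (∀ y z, StarPos y → StarPos z → y * z = 0 →
          φ (Pi.single i y) * φ (Pi.single i z) = 0))

/-- The new type of tracial nuclear dimension at most `n` (Definition 2.9). -/
def NewTracialNucDim (A : Type*) [CStarAlgebra A] [PartialOrder A] [StarOrderedRing A]
    (n : ℕ) : Prop :=
  ∀ (F : Finset A), (∀ x ∈ F, 0 ≤ x) → ∀ ε : ℝ, 0 < ε → ∀ a : A, 0 ≤ a → a ≠ 0 →
    ∃ (m : Fin (n + 1) → ℕ) (d : ∀ i, Fin (m i) → ℕ)
      (ψ : A → FDCStar n m d) (φ : FDCStar n m d → A),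
      IsLinearMap ℂ ψ ∧ IsLinearMap ℂ φ ∧ IsCPMap ψ ∧ IsCPMap φ ∧
      (∀ x ∈ F, ∃ x' : A, 0 ≤ x' ∧ ‖x - x' - φ (ψ x)‖ < ε) ∧
      CuntzLE (cfc (fun t : ℝ => max 0 (t - ε)) (1 - φ (ψ 1))) a ∧
      (∀ x : A, ‖ψ x‖ ≤ ‖x‖) ∧
      (∀ i : Fin (n + 1),
        (∀ y, ‖φ (Pi.single i y)‖ ≤ ‖y‖) ∧
        (∀ y z, StarPos y → StarPos z → y * z = 0 →
          φ (Pi.single i y) * φ (Pi.single i z) = 0))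

set_option linter.unusedSectionVars false
section Helpers
variable {A : Type*} [CStarAlgebra A] [PartialOrder A] [StarOrderedRing A]

lemma cuntzLE_of_conj (x y v : A) (hx : x = v * y * star v) : CuntzLE x y := by
  exact ⟨fun _ => v, by simp [← hx]⟩

lemma cuntzLE_trans {x y z : A} (h1 : CuntzLE x y) (h2 : CuntzLE y z) : CuntzLE x z := by
  obtain ⟨v, hv⟩ := h1
  obtain ⟨w, hw⟩ := h2
  have key : ∀ n : ℕ, ∃ k : ℕ,
      ‖v n * (w k * z * star (w k)) * star (v n) - x‖
        ≤ 1/(n+1) + ‖v n * y * star (v n) - x‖ := by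
    intro n
    have hpos : 0 < (1/(n+1) : ℝ) / (‖v n‖^2 + 1) := by positivity
    obtain ⟨k, hk⟩ := (Metric.tendsto_atTop.mp hw _ hpos).imp (fun k hk => hk k le_rfl)
    refine ⟨k, ?_⟩
    rw [Real.dist_eq, sub_zero, abs_of_nonneg (norm_nonneg _)] at hk
    have h1 : v n * (w k * z * star (w k)) * star (v n) - x
        = v n * (w k * z * star (w k) - y) * star (v n) + (v n * y * star (v n) - x) := by
      noncomm_ring
    calc ‖v n * (w k * z * star (w k)) * star (v n) - x‖
        ≤ ‖v n * (w k * z * star (w k) - y) * star (v n)‖ + ‖v n * y * star (v n) - x‖ := by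
          rw [h1]; exact norm_add_le _ _
      _ ≤ 1/(n+1) + ‖v n * y * star (v n) - x‖ := by
          gcongr
          calc ‖v n * (w k * z * star (w k) - y) * star (v n)‖
              ≤ ‖v n‖ * ‖w k * z * star (w k) - y‖ * ‖star (v n)‖ :=
                norm_mul₃_le
            _ = ‖v n‖^2 * ‖w k * z * star (w k) - y‖ := by rw [norm_star]; ring
            _ ≤ ‖v n‖^2 * ((1/(n+1) : ℝ) / (‖v n‖^2 + 1)) := by gcongr
            _ ≤ 1/(n+1) := by
                rw [div_eq_mul_inv, ← mul_assoc]
                have h2 : ‖v n‖^2 * (1/(n+1) : ℝ) ≤ (‖v n‖^2+1) * (1/(n+1)) := by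
                  have : (0:ℝ) ≤ 1/(n+1) := by positivity
                  nlinarith [sq_nonneg ‖v n‖]
                calc ‖v n‖^2 * (1/(n+1) : ℝ) * (‖v n‖^2 + 1)⁻¹
                    ≤ (‖v n‖^2+1) * (1/(n+1)) * (‖v n‖^2 + 1)⁻¹ := by
                      gcongr
                  _ = 1/(n+1) * ((‖v n‖^2+1) * (‖v n‖^2 + 1)⁻¹) := by ring
                  _ = 1/(n+1) := by
                      rw [mul_inv_cancel₀ (by positivity), mul_one]
  choose k hk using key
  refine ⟨fun n => v n * w (k n), ?_⟩
  have hb : Tendsto (fun n : ℕ => 1/(n+1) + ‖v n * y * star (v n) - x‖) atTop (nhds 0) := by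
    have := tendsto_one_div_add_atTop_nhds_zero_nat.add hv
    simpa using this
  refine squeeze_zero (fun n => norm_nonneg _) (fun n => ?_) hb
  simpa [star_mul, mul_assoc] using hk n

lemma cfc_conj_self (f : ℝ → ℝ) (y : A) (hy : IsSelfAdjoint y)
    (hf : ContinuousOn f (spectrum ℝ y)) :
    cfc f y * y * cfc f y = cfc (fun t => f t * t * f t) y := by
  nth_rewrite 2 [← cfc_id ℝ y hy]
  rw [← cfc_mul f id y hf continuousOn_id,
    ← cfc_mul (fun x => f x * id x) f y (hf.mul continuousOn_id) hf]
  exact cfc_congr fun t _ => rfl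

lemma cfc_sq_self (f : ℝ → ℝ) (y : A) (hf : ContinuousOn f (spectrum ℝ y)) :
    cfc f y * cfc f y = cfc (fun t => f t * f t) y :=
  (cfc_mul f f y hf hf).symm

lemma cuntzLE_of_le {x y : A} (hx : 0 ≤ x) (hxy : x ≤ y) : CuntzLE x y := by
  have hy : 0 ≤ y := hx.trans hxy
  have hsy : IsSelfAdjoint y := .of_nonneg hy
  have hsx : IsSelfAdjoint x := .of_nonneg hx
  set sx := cfc Real.sqrt x with hsxdef
  have hsxsa : IsSelfAdjoint sx := IsSelfAdjoint.cfc
  have hsx2 : sx * sx = x := by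
    rw [hsxdef, cfc_sq_self _ _ Real.continuous_sqrt.continuousOn]
    calc cfc (fun t => Real.sqrt t * Real.sqrt t) x
        = cfc (id : ℝ → ℝ) x :=
          cfc_congr (fun t ht => Real.mul_self_sqrt (spectrum_nonneg_of_nonneg hx ht))
      _ = x := cfc_id ℝ x
  have key : ∀ n : ℕ, ∃ v : A, ‖v * y * star v - x‖ ≤ 1/(n+1) := by
    intro n
    set δ : ℝ := 1/(n+1) with hδdef
    have hδ : 0 < δ := by positivity
    have hspec : ∀ t ∈ spectrum ℝ y, 0 ≤ t := fun t ht => spectrum_nonneg_of_nonneg hy ht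
    set g : ℝ → ℝ := fun t => (Real.sqrt (t + δ))⁻¹ with hgdef
    have hg : ContinuousOn g (spectrum ℝ y) := by
      apply ContinuousOn.inv₀
      · exact (Real.continuous_sqrt.comp (continuous_add_right δ)).continuousOn
      · intro t ht
        have := hspec t ht
        positivity
    have hh : ContinuousOn (fun t : ℝ => t / (t + δ)) (spectrum ℝ y) :=
      ContinuousOn.div continuousOn_id ((continuous_add_right δ).continuousOn)
        (fun t ht => by have := hspec t ht; positivity)
    have hr' : ContinuousOn (fun t : ℝ => Real.sqrt (1 - t / (t + δ))) (spectrum ℝ y) :=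
      Real.continuous_sqrt.comp_continuousOn (continuousOn_const.sub hh)
    set v : A := sx * cfc g y with hvdef
    have hgsa : IsSelfAdjoint (cfc g y) := IsSelfAdjoint.cfc
    have hstarv : star v = cfc g y * sx := by
      rw [hvdef, star_mul, hgsa.star_eq, hsxsa.star_eq]
    have hmid : cfc g y * y * cfc g y = cfc (fun t => t / (t + δ)) y := by
      rw [cfc_conj_self g y hsy hg]
      apply cfc_congr
      intro t ht
      have ht0 := hspec t ht
      have hs : Real.sqrt (t + δ) * Real.sqrt (t + δ) = t + δ :=
        Real.mul_self_sqrt (by positivity)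
      calc g t * t * g t = t * ((Real.sqrt (t+δ)) * Real.sqrt (t+δ))⁻¹ := by
            rw [hgdef]; simp only [mul_inv]; ring
        _ = t / (t + δ) := by rw [hs, div_eq_mul_inv]
    set k : A := 1 - cfc (fun t => t / (t + δ)) y with hkdef
    have hdiff : v * y * star v - x = -(sx * k * sx) := by
      rw [hstarv, hvdef, hkdef]
      have h1 : sx * cfc g y * y * (cfc g y * sx) = sx * (cfc g y * y * cfc g y) * sx := by
        noncomm_ring
      rw [h1, hmid, mul_sub, sub_mul, mul_one, hsx2]
      abel
    have hk : k = cfc (fun t => 1 - t / (t + δ)) y := by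
      rw [hkdef, cfc_sub _ _ y continuousOn_const hh, cfc_const_one ℝ y]
    have hub : ∀ t ∈ spectrum ℝ y, 0 ≤ 1 - t / (t + δ) := by
      intro t ht
      have ht0 := hspec t ht
      rw [sub_nonneg, div_le_one (by positivity)]
      linarith
    set r : A := cfc (fun t => Real.sqrt (1 - t / (t + δ))) y with hrdef
    have hrsa : IsSelfAdjoint r := IsSelfAdjoint.cfc
    have hr2 : r * r = k := by
      rw [hrdef, cfc_sq_self _ _ hr', hk]
      exact cfc_congr fun t ht => Real.mul_self_sqrt (hub t ht)
    set w : A := r * sx with hwdef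
    have hskw : sx * k * sx = star w * w := by
      rw [hwdef, star_mul, hrsa.star_eq, hsxsa.star_eq, ← hr2]
      noncomm_ring
    have hnorm : ‖v * y * star v - x‖ = ‖w * star w‖ := by
      rw [hdiff, norm_neg, hskw, CStarRing.norm_star_mul_self, ← CStarRing.norm_self_mul_star]
    have hwsw : w * star w = r * x * r := by
      rw [hwdef, star_mul, hrsa.star_eq, hsxsa.star_eq,
        show r * sx * (sx * r) = r * (sx * sx) * r by noncomm_ring, hsx2]
    have hle : w * star w ≤ r * y * r := by
      rw [hwsw]
      have := star_left_conjugate_le_conjugate hxy r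
      rwa [hrsa.star_eq] at this
    have hryr : r * y * r
        = cfc (fun t => Real.sqrt (1 - t / (t + δ)) * t * Real.sqrt (1 - t / (t + δ))) y := by
      rw [hrdef, cfc_conj_self _ y hsy hr']
    have hbound : ‖r * y * r‖ ≤ δ := by
      rw [hryr]
      apply norm_cfc_le hδ.le
      intro t ht
      have ht0 := hspec t ht
      have h1 := Real.mul_self_sqrt (hub t ht)
      have h2 : Real.sqrt (1 - t / (t + δ)) * t * Real.sqrt (1 - t / (t + δ))
          = (1 - t / (t + δ)) * t := by
        rw [mul_comm (Real.sqrt (1 - t / (t + δ))) t, mul_assoc, h1]; ring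
      rw [h2, Real.norm_eq_abs]
      have h3 : 1 - t / (t + δ) = δ / (t + δ) := by
        field_simp
        ring
      rw [h3, abs_of_nonneg (by positivity), div_mul_eq_mul_div, div_le_iff₀ (by positivity)]
      nlinarith
    refine ⟨v, ?_⟩
    rw [hnorm]
    refine le_trans ?_ hbound
    exact CStarAlgebra.norm_le_norm_of_nonneg_of_le (mul_star_self_nonneg w) hle
  choose v hv using key
  refine ⟨v, squeeze_zero (fun n => norm_nonneg _) hv ?_⟩
  exact tendsto_one_div_add_atTop_nhds_zero_nat

lemma cuntzLE_self_sq {c : A} (hc : 0 ≤ c) : CuntzLE c (c * c) := by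
  have hsc : IsSelfAdjoint c := .of_nonneg hc
  have hspec : ∀ t ∈ spectrum ℝ c, 0 ≤ t := fun t ht => spectrum_nonneg_of_nonneg hc ht
  have hcc : c * c = cfc (fun t : ℝ => t * t) c := by
    conv_lhs => rw [← cfc_id ℝ c hsc]
    exact (cfc_mul _ _ c continuousOn_id continuousOn_id).symm
  have key : ∀ n : ℕ, ∃ v : A, ‖v * (c * c) * star v - c‖ ≤ 1/(n+1) := by
    intro n
    set δ : ℝ := 1/(n+1) with hδdef
    have hδ : 0 < δ := by positivity
    set g : ℝ → ℝ := fun t => (Real.sqrt (t + δ))⁻¹ with hgdef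
    have hg : ContinuousOn g (spectrum ℝ c) := by
      apply ContinuousOn.inv₀
      · exact (Real.continuous_sqrt.comp (continuous_add_right δ)).continuousOn
      · intro t ht; have := hspec t ht; positivity
    have hm : ContinuousOn (fun t : ℝ => t * t) (spectrum ℝ c) :=
      continuousOn_id.mul continuousOn_id
    set v : A := cfc g c with hvdef
    have hvsa : IsSelfAdjoint v := IsSelfAdjoint.cfc
    have hconj : v * (c * c) * star v = cfc (fun t => g t * (t * t) * g t) c := by
      rw [hvsa.star_eq, hvdef, hcc,
        ← cfc_mul g _ c hg hm, ← cfc_mul (fun x => g x * (x * x)) g c (hg.mul hm) hg]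
    refine ⟨v, ?_⟩
    rw [hconj]
    nth_rewrite 2 [← cfc_id ℝ c hsc]
    rw [← cfc_sub (fun t => g t * (t * t) * g t) id c ((hg.mul hm).mul hg) continuousOn_id]
    apply norm_cfc_le hδ.le
    intro t ht
    have ht0 := hspec t ht
    have hs : Real.sqrt (t + δ) * Real.sqrt (t + δ) = t + δ :=
      Real.mul_self_sqrt (by positivity)
    have hgg : g t * g t = (t + δ)⁻¹ := by
      rw [hgdef]
      simp only
      rw [← mul_inv, hs]
    have h1 : g t * (t * t) * g t = t * t / (t + δ) := by
      rw [div_eq_mul_inv, ← hgg]; ring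
    simp only [id_eq]
    rw [h1, Real.norm_eq_abs]
    have h2 : t * t / (t + δ) - t = -(δ * t / (t + δ)) := by
      field_simp
      ring
    rw [h2, abs_neg, abs_of_nonneg (by positivity), div_le_iff₀ (by positivity)]
    nlinarith
  choose v hv using key
  refine ⟨v, squeeze_zero (fun n => norm_nonneg _) hv ?_⟩
  exact tendsto_one_div_add_atTop_nhds_zero_nat

lemma isCPMap_starPos {R S : Type*} [NonUnitalSemiring R] [StarRing R] [NonUnitalSemiring S]
    [StarRing S] {f : R → S} (hf : IsCPMap f) {x : R} (hx : ∃ y, x = star y * y) :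
    ∃ z, f x = star z * z := by
  obtain ⟨y, rfl⟩ := hx
  obtain ⟨N', hN'⟩ := hf 1 (Matrix.of fun _ _ => star y * y)
    ⟨Matrix.of fun _ _ => y, by
      ext i j
      simp [Matrix.mul_apply, Matrix.star_apply]⟩
  refine ⟨N' 0 0, ?_⟩
  have := congrFun (congrFun hN' 0) 0
  simpa [Matrix.mul_apply, Matrix.star_apply, Matrix.map_apply] using this

end Helpers

/-- `T²dim_nuc(A) ≤ n` implies the new type of tracial nuclear dimension
at most `n`. -/
theorem t2_implies_new_tracial_nuc_dim {A : Type*} [CStarAlgebra A] [PartialOrder A]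
    [StarOrderedRing A] (n : ℕ) (h : T2TracialNucDim A n) :
    NewTracialNucDim A n := by
  intro F hF ε hε a ha hane
  classical
  obtain ⟨m, d, ψ, φ, hlψ, hlφ, hcpψ, hcpφ, happrox, hψnorm, hφi⟩ :=
    h (insert 1 F) (fun x hx => by
      rcases Finset.mem_insert.mp hx with rfl | hx
      · exact zero_le_one
      · exact hF x hx) ε hε a ha hane
  refine ⟨m, d, ψ, φ, hlψ, hlφ, hcpψ, hcpφ,
    fun x hx => by
      obtain ⟨x', hx'0, _, hx'n⟩ := happrox x (Finset.mem_insert_of_mem hx)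
      exact ⟨x', hx'0, hx'n⟩, ?_, hψnorm, hφi⟩
  -- the CuntzLE condition
  obtain ⟨x', hx'0, hx'c, hx'n⟩ := happrox 1 (Finset.mem_insert_self 1 F)
  -- φ (ψ 1) is positive
  have hφψ1 : 0 ≤ φ (ψ 1) := by
    obtain ⟨z, hz⟩ := isCPMap_starPos hcpφ (isCPMap_starPos hcpψ (x := (1 : A)) ⟨1, by simp⟩)
    rw [hz]
    exact star_mul_self_nonneg z
  set b0 : A := 1 - φ (ψ 1) with hb0def
  have hb0sa : IsSelfAdjoint b0 :=
    (IsSelfAdjoint.one A).sub (IsSelfAdjoint.of_nonneg hφψ1)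
  set f : ℝ → ℝ := fun t => max 0 (t - ε) with hfdef
  have hfc : ContinuousOn f (spectrum ℝ b0) :=
    (continuous_const.max (continuous_id.sub continuous_const)).continuousOn
  have hsqfc : ContinuousOn (fun t => Real.sqrt (f t)) (spectrum ℝ b0) :=
    Real.continuous_sqrt.comp_continuousOn hfc
  set c : A := cfc f b0 with hcdef
  have hc0 : 0 ≤ c := cfc_nonneg (fun t _ => le_max_left _ _)
  have hcsa : IsSelfAdjoint c := IsSelfAdjoint.of_nonneg hc0
  set s : A := cfc (fun t => Real.sqrt (f t)) b0 with hsdef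
  have hssa : IsSelfAdjoint s := IsSelfAdjoint.cfc
  have hss : s * s = c := by
    rw [hsdef, cfc_sq_self _ _ hsqfc, hcdef]
    exact cfc_congr fun t _ => Real.mul_self_sqrt (le_max_left _ _)
  -- b0 - x' ≤ ε • 1
  have hdist : ‖b0 - x'‖ ≤ ε := by
    refine le_of_lt ?_
    have : b0 - x' = 1 - x' - φ (ψ 1) := by rw [hb0def]; abel
    rwa [this]
  have hba : b0 - x' ≤ algebraMap ℝ A ε := by
    refine le_trans (IsSelfAdjoint.le_algebraMap_norm_self
      (hb0sa.sub (IsSelfAdjoint.of_nonneg hx'0))) ?_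
    rw [← sub_nonneg, ← map_sub, Algebra.algebraMap_eq_smul_one]
    exact smul_nonneg (by linarith) zero_le_one
  set e : A := s * x' * s with hedef
  have he0 : 0 ≤ e := by
    have := star_left_conjugate_nonneg hx'0 s
    rwa [hssa.star_eq] at this
  -- c * c ≤ e
  have hcc : c * c ≤ e := by
    have hconj : s * (b0 - x') * s ≤ s * algebraMap ℝ A ε * s := by
      have := star_left_conjugate_le_conjugate hba s
      rwa [hssa.star_eq] at this
    have h1 : s * algebraMap ℝ A ε * s = ε • c := by
      rw [Algebra.algebraMap_eq_smul_one, ← hss]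
      simp [mul_smul_comm, smul_mul_assoc]
    have h2 : s * (b0 - x') * s = s * b0 * s - e := by
      rw [hedef]; noncomm_ring
    have h3 : s * b0 * s - e ≤ ε • c := by rw [← h2, ← h1]; exact hconj
    have h4 : c * c = s * b0 * s - ε • c := by
      have hsbs : s * b0 * s = cfc (fun t => Real.sqrt (f t) * t * Real.sqrt (f t)) b0 := by
        rw [hsdef, cfc_conj_self _ b0 hb0sa hsqfc]
      have hsc : ε • c = cfc (fun t => ε * f t) b0 := by
        rw [hcdef, cfc_const_mul ε f b0 hfc]
      have hc1 : ContinuousOn (fun t : ℝ => Real.sqrt (f t) * t * Real.sqrt (f t))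
          (spectrum ℝ b0) := (hsqfc.mul continuousOn_id).mul hsqfc
      have hc2 : ContinuousOn (fun t : ℝ => ε * f t) (spectrum ℝ b0) :=
        continuousOn_const.mul hfc
      rw [hcdef, cfc_sq_self f b0 hfc, hsbs, hsc,
        ← cfc_sub (fun t => Real.sqrt (f t) * t * Real.sqrt (f t)) (fun t => ε * f t) b0 hc1 hc2]
      apply cfc_congr
      intro t _
      simp only
      have h5 : Real.sqrt (f t) * t * Real.sqrt (f t) = f t * t := by
        rw [mul_comm (Real.sqrt (f t)) t, mul_assoc, Real.mul_self_sqrt (le_max_left _ _)]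
        ring
      rw [h5]
      rcases le_or_gt t ε with hle | hlt
      · have : f t = 0 := max_eq_left (by linarith)
        simp [this]
      · have : f t = t - ε := max_eq_right (by linarith)
        rw [this]; ring
    rw [h4]
    have h6 := sub_le_iff_le_add.mp h3
    calc s * b0 * s - ε • c ≤ ε • c + e - ε • c := sub_le_sub_right h6 _
      _ = e := by abel
  -- chain of Cuntz subequivalences
  have hcc0 : 0 ≤ c * c := by
    have := star_mul_self_nonneg c
    rwa [hcsa.star_eq] at this
  exact cuntzLE_trans (cuntzLE_self_sq hc0)
    (cuntzLE_trans (cuntzLE_of_le hcc0 hcc)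
      (cuntzLE_trans (cuntzLE_of_conj e x' s (by rw [hssa.star_eq, hedef])) hx'c))
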